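/- With ∂_M(ω) = −Σ_{k=1}^{s−1} (−1)^k M_k(ω) and ∂_I(ω) = Σ_{k=0}^{s} (−1)^k I_k(ω) extended linearly to the free abelian group Z[Ω] on all compositions (s denoting the length of ω), the two differentials anticommute: ∂_M ∘ ∂_I + ∂_I ∘ ∂_M = 0. Consequently ∂ = ∂_M + ∂_I satisfies ∂ ∘ ∂ = 0. -/

import Mathlib

/-- The merge operation (0-indexed at `i`); with 1-indexed notation `M_k = mergeAt · (k-1)`. -/
def mergeAt (l : List ℕ) (i : ℕ) : List ℕ :=
  l.take i ++ [l.getD i 0 + l.getD (i + 1) 0] ++ l.drop (i + 2)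

/-- The insert operation `I_k`: insert a new entry `2` after the `k`-th entry. -/
def insertAt2 (l : List ℕ) (k : ℕ) : List ℕ :=
  l.take k ++ [2] ++ l.drop k

/-- `∂_M(ω) = −Σ_{k=1}^{s−1} (−1)^k M_k(ω)`. -/
noncomputable def dM (ω : List ℕ) : List ℕ →₀ ℤ :=
  -∑ k ∈ Finset.Ico 1 ω.length, ((-1 : ℤ) ^ k) • Finsupp.single (mergeAt ω (k - 1)) (1 : ℤ)

/-- `∂_I(ω) = Σ_{k=0}^{s} (−1)^k I_k(ω)`. -/
noncomputable def dI (ω : List ℕ) : List ℕ →₀ ℤ :=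
  ∑ k ∈ Finset.range (ω.length + 1), ((-1 : ℤ) ^ k) • Finsupp.single (insertAt2 ω k) (1 : ℤ)

/-- The merge differential `∂_M : ℤ[Ω] → ℤ[Ω]`. -/
noncomputable def boundaryM : (List ℕ →₀ ℤ) →ₗ[ℤ] (List ℕ →₀ ℤ) :=
  Finsupp.lsum ℤ fun ω => LinearMap.toSpanSingleton ℤ _ (dM ω)

/-- The insert differential `∂_I : ℤ[Ω] → ℤ[Ω]`. -/
noncomputable def boundaryI : (List ℕ →₀ ℤ) →ₗ[ℤ] (List ℕ →₀ ℤ) :=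
  Finsupp.lsum ℤ fun ω => LinearMap.toSpanSingleton ℤ _ (dI ω)

/-! ### Basic recursion lemmas for the list operations -/

lemma insertAt2_zero (l : List ℕ) : insertAt2 l 0 = 2 :: l := by simp [insertAt2]

lemma insertAt2_cons_succ (x : ℕ) (l : List ℕ) (k : ℕ) :
    insertAt2 (x :: l) (k+1) = x :: insertAt2 l k := by
  simp [insertAt2]

lemma mergeAt_cons_succ (x : ℕ) (l : List ℕ) (i : ℕ) :
    mergeAt (x :: l) (i+1) = x :: mergeAt l i := by
  simp [mergeAt, List.drop_succ_cons]

lemma mergeAt_cons_cons_zero (x y : ℕ) (l : List ℕ) :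
    mergeAt (x :: y :: l) 0 = (x+y) :: l := by
  simp [mergeAt]

lemma insertAt2_length (l : List ℕ) (k : ℕ) (h : k ≤ l.length) :
    (insertAt2 l k).length = l.length + 1 := by
  simp [insertAt2]; omega

lemma mergeAt_length (l : List ℕ) (i : ℕ) (h : i + 1 < l.length) :
    (mergeAt l i).length = l.length - 1 := by
  simp [mergeAt]; omega

/-! ### The commutation identities -/

lemma L1 : ∀ (l : List ℕ) (a b : ℕ), b + 2 ≤ a → a ≤ l.length →
    mergeAt (insertAt2 l a) b = insertAt2 (mergeAt l b) (a-1) := by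
  intro l
  induction l with
  | nil => intro a b h1 h2; simp at h2; omega
  | cons x l ih =>
    intro a b h1 h2
    match b, a with
    | 0, (a+2) =>
      match l with
      | [] => simp at h2
      | y :: l =>
        rw [insertAt2_cons_succ, insertAt2_cons_succ, mergeAt_cons_cons_zero,
          mergeAt_cons_cons_zero]
        show _ = insertAt2 _ (a+1)
        rw [insertAt2_cons_succ]
    | (b+1), (a+1) =>
      rw [insertAt2_cons_succ, mergeAt_cons_succ, mergeAt_cons_succ]
      have : a + 1 - 1 = (a - 1) + 1 := by omega
      rw [this, insertAt2_cons_succ, ih a b (by omega) (by simpa using h2)]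

lemma L2 : ∀ (l : List ℕ) (a b : ℕ), a < b → b < l.length →
    mergeAt (insertAt2 l a) b = insertAt2 (mergeAt l (b-1)) a := by
  intro l
  induction l with
  | nil => intro a b h1 h2; simp at h2
  | cons x l ih =>
    intro a b h1 h2
    match a, b with
    | 0, (b+1) =>
      rw [insertAt2_zero, insertAt2_zero]
      show mergeAt (2 :: x :: l) (b+1) = _
      rw [mergeAt_cons_succ]
      simp
    | (a+1), (b+1) =>
      rw [insertAt2_cons_succ, mergeAt_cons_succ]
      have hb : b + 1 - 1 = (b - 1) + 1 := by omega
      rw [hb, mergeAt_cons_succ, insertAt2_cons_succ, ih a b (by omega) (by simpa using h2)]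

lemma L3 : ∀ (l : List ℕ) (k : ℕ), k < l.length →
    mergeAt (insertAt2 l k) k = mergeAt (insertAt2 l (k+1)) k := by
  intro l
  induction l with
  | nil => intro k h; simp at h
  | cons x l ih =>
    intro k h
    match k with
    | 0 =>
      rw [insertAt2_zero]
      show mergeAt (2 :: x :: l) 0 = mergeAt (insertAt2 (x::l) 1) 0
      rw [insertAt2_cons_succ, insertAt2_zero, mergeAt_cons_cons_zero, mergeAt_cons_cons_zero,
        Nat.add_comm]
    | (k+1) =>
      rw [insertAt2_cons_succ, insertAt2_cons_succ, mergeAt_cons_succ, mergeAt_cons_succ,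
        ih k (by simpa using h)]

lemma L4 : ∀ (l : List ℕ) (i j : ℕ), j < i → i + 1 < l.length →
    mergeAt (mergeAt l i) j = mergeAt (mergeAt l j) (i-1) := by
  intro l
  induction l with
  | nil => intro i j h1 h2; simp at h2
  | cons x l ih =>
    intro i j h1 h2
    match j, i with
    | 0, 1 =>
      match l with
      | y :: z :: l =>
        rw [show mergeAt (x::y::z::l) 1 = x :: mergeAt (y::z::l) 0 from mergeAt_cons_succ ..,
          mergeAt_cons_cons_zero, mergeAt_cons_cons_zero, mergeAt_cons_cons_zero]
        show _ = mergeAt ((x+y) :: z :: l) 0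
        rw [mergeAt_cons_cons_zero, Nat.add_assoc]
      | [] => simp at h2
      | [y] => simp at h2
    | 0, (i+2) =>
      match l with
      | y :: l =>
        rw [mergeAt_cons_succ, mergeAt_cons_succ, mergeAt_cons_cons_zero, mergeAt_cons_cons_zero]
        show _ = mergeAt ((x+y) :: l) (i+1)
        rw [mergeAt_cons_succ]
      | [] => simp at h2
    | (j+1), (i+1) =>
      rw [mergeAt_cons_succ, mergeAt_cons_succ, mergeAt_cons_succ]
      have : i + 1 - 1 = (i - 1) + 1 := by omega
      rw [this, mergeAt_cons_succ, ih i j (by omega) (by simpa using h2)]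

lemma L5 : ∀ (l : List ℕ) (k j : ℕ), j ≤ k →
    insertAt2 (insertAt2 l k) j = insertAt2 (insertAt2 l j) (k+1) := by
  intro l
  induction l with
  | nil =>
    intro k j h
    match j, k with
    | 0, k => simp [insertAt2]
    | (j+1), (k+1) => simp [insertAt2]
  | cons x l ih =>
    intro k j h
    match j, k with
    | 0, k => rw [insertAt2_zero, insertAt2_zero]; rfl
    | (j+1), (k+1) =>
      rw [insertAt2_cons_succ, insertAt2_cons_succ, insertAt2_cons_succ,
        insertAt2_cons_succ, ih k j (by omega)]

/-! ### Finsupp-level preliminaries -/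

lemma dM_eq (ω : List ℕ) :
    dM ω = ∑ i ∈ Finset.range (ω.length - 1),
      ((-1:ℤ)^i) • Finsupp.single (mergeAt ω i) (1:ℤ) := by
  rw [dM, Finset.sum_Ico_eq_sum_range, ← Finset.sum_neg_distrib]
  apply Finset.sum_congr rfl
  intro i _
  have h : 1 + i - 1 = i := by omega
  rw [h, pow_add, pow_one, mul_comm, mul_smul]
  simp

lemma boundaryM_single (ω : List ℕ) (c : ℤ) :
    boundaryM (Finsupp.single ω c) = c • dM ω := by
  rw [boundaryM, Finsupp.lsum_single, LinearMap.toSpanSingleton_apply]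

lemma boundaryI_single (ω : List ℕ) (c : ℤ) :
    boundaryI (Finsupp.single ω c) = c • dI ω := by
  rw [boundaryI, Finsupp.lsum_single, LinearMap.toSpanSingleton_apply]

lemma sign_cancel (m n : ℕ) (h : m + 1 = n ∨ n + 1 = m) (x : List ℕ →₀ ℤ) :
    ((-1:ℤ)^m) • x + ((-1:ℤ)^n) • x = 0 := by
  rcases h with h | h
  · rw [← h, pow_succ, mul_neg_one, neg_smul, add_neg_cancel]
  · rw [← h, pow_succ, mul_neg_one, neg_smul, neg_add_cancel]

/-! ### `∂_M ∘ ∂_M = 0` on basis elements -/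

lemma keyMM (ω : List ℕ) : boundaryM (dM ω) = 0 := by
  rw [dM_eq ω, map_sum]
  have step : ∀ i ∈ Finset.range (ω.length - 1),
      boundaryM ((-1:ℤ)^i • Finsupp.single (mergeAt ω i) (1:ℤ))
      = ∑ j ∈ Finset.range (ω.length - 2),
          ((-1:ℤ)^(i+j)) • Finsupp.single (mergeAt (mergeAt ω i) j) (1:ℤ) := by
    intro i hi
    simp only [Finset.mem_range] at hi
    rw [map_smul, boundaryM_single, one_smul, dM_eq,
      mergeAt_length ω i (by omega)]
    have h2 : ω.length - 1 - 1 = ω.length - 2 := by omega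
    rw [h2, Finset.smul_sum]
    apply Finset.sum_congr rfl
    intro j _
    rw [smul_smul, pow_add]
  rw [Finset.sum_congr rfl step, ← Finset.sum_product']
  refine Finset.sum_involution
    (fun p _ => if p.2 < p.1 then (p.2, p.1 - 1) else (p.2 + 1, p.1)) ?_ ?_ ?_ ?_
  · rintro ⟨i, j⟩ hp
    simp only [Finset.mem_product, Finset.mem_range] at hp
    dsimp only
    split_ifs with h
    · rw [L4 ω i j h (by omega)]
      exact sign_cancel _ _ (by omega) _
    · rw [L4 ω (j+1) i (by omega) (by omega)]
      have : j + 1 - 1 = j := by omega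
      rw [this]
      exact sign_cancel _ _ (by omega) _
  · rintro ⟨i, j⟩ hp -
    dsimp only
    split_ifs with h <;> simp only [ne_eq, Prod.mk.injEq, not_and] <;> omega
  · rintro ⟨i, j⟩ hp
    simp only [Finset.mem_product, Finset.mem_range] at hp
    dsimp only
    split_ifs with h <;> simp only [Finset.mem_product, Finset.mem_range] <;> omega
  · rintro ⟨i, j⟩ hp
    simp only [Finset.mem_product, Finset.mem_range] at hp
    dsimp only
    split_ifs with h1 h2 h3 <;> simp_all [Prod.ext_iff] <;> omega

/-! ### `∂_I ∘ ∂_I = 0` on basis elements -/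

lemma keyII (ω : List ℕ) : boundaryI (dI ω) = 0 := by
  rw [dI, map_sum]
  have step : ∀ k ∈ Finset.range (ω.length + 1),
      boundaryI ((-1:ℤ)^k • Finsupp.single (insertAt2 ω k) (1:ℤ))
      = ∑ j ∈ Finset.range (ω.length + 2),
          ((-1:ℤ)^(k+j)) • Finsupp.single (insertAt2 (insertAt2 ω k) j) (1:ℤ) := by
    intro k hk
    simp only [Finset.mem_range] at hk
    rw [map_smul, boundaryI_single, one_smul, dI,
      insertAt2_length ω k (by omega)]
    rw [Finset.smul_sum]
    apply Finset.sum_congr rfl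
    intro j _
    rw [smul_smul, pow_add]
  rw [Finset.sum_congr rfl step, ← Finset.sum_product']
  refine Finset.sum_involution
    (fun p _ => if p.2 ≤ p.1 then (p.2, p.1 + 1) else (p.2 - 1, p.1)) ?_ ?_ ?_ ?_
  · rintro ⟨k, j⟩ hp
    simp only [Finset.mem_product, Finset.mem_range] at hp
    dsimp only
    split_ifs with h
    · rw [L5 ω k j h]
      exact sign_cancel _ _ (by omega) _
    · rw [L5 ω (j-1) k (by omega)]
      have : j - 1 + 1 = j := by omega
      rw [this]
      exact sign_cancel _ _ (by omega) _
  · rintro ⟨k, j⟩ hp -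
    dsimp only
    split_ifs with h <;> simp only [ne_eq, Prod.mk.injEq, not_and] <;> omega
  · rintro ⟨k, j⟩ hp
    simp only [Finset.mem_product, Finset.mem_range] at hp
    dsimp only
    split_ifs with h <;> simp only [Finset.mem_product, Finset.mem_range] <;> omega
  · rintro ⟨k, j⟩ hp
    simp only [Finset.mem_product, Finset.mem_range] at hp
    dsimp only
    split_ifs with h1 h2 h3 <;> simp_all [Prod.ext_iff] <;> omega

/-! ### The mixed identity on basis elements -/

/-- The combined term function for the mixed double sums. -/
noncomputable def Fmi (ω : List ℕ) (p : ℕ × ℕ × ℕ) : List ℕ →₀ ℤ :=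
  if p.1 = 0 then
    ((-1:ℤ)^(p.2.1 + p.2.2)) • Finsupp.single (mergeAt (insertAt2 ω p.2.1) p.2.2) (1:ℤ)
  else
    ((-1:ℤ)^(p.2.1 + p.2.2)) • Finsupp.single (insertAt2 (mergeAt ω p.2.1) p.2.2) (1:ℤ)

/-- The sign-reversing involution for the mixed double sums. -/
def gmi (p : ℕ × ℕ × ℕ) : ℕ × ℕ × ℕ :=
  if p.1 = 0 then
    if p.2.2 + 2 ≤ p.2.1 then (1, p.2.2, p.2.1 - 1)
    else if p.2.1 + 1 ≤ p.2.2 then (1, p.2.2 - 1, p.2.1)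
    else if p.2.2 = p.2.1 then (0, p.2.1 + 1, p.2.1)
    else (0, p.2.1 - 1, p.2.1 - 1)
  else
    if p.2.1 < p.2.2 then (0, p.2.2 + 1, p.2.1) else (0, p.2.2, p.2.1 + 1)

lemma Fmi_zero (ω : List ℕ) (a b : ℕ) :
    Fmi ω (0, a, b) = ((-1:ℤ)^(a+b)) • Finsupp.single (mergeAt (insertAt2 ω a) b) (1:ℤ) :=
  if_pos rfl

lemma Fmi_one (ω : List ℕ) (a b : ℕ) :
    Fmi ω (1, a, b) = ((-1:ℤ)^(a+b)) • Finsupp.single (insertAt2 (mergeAt ω a) b) (1:ℤ) :=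
  if_neg one_ne_zero

lemma gmi_zero (a b : ℕ) :
    gmi (0, a, b) = if b + 2 ≤ a then (1, b, a-1)
      else if a + 1 ≤ b then (1, b-1, a)
      else if b = a then (0, a+1, a)
      else (0, a-1, a-1) :=
  if_pos rfl

lemma gmi_one (a b : ℕ) :
    gmi (1, a, b) = if a < b then (0, b+1, a) else (0, b, a+1) :=
  if_neg one_ne_zero

set_option maxHeartbeats 1000000 in
lemma keyMI (ω : List ℕ) : boundaryM (dI ω) + boundaryI (dM ω) = 0 := by
  have hM : boundaryM (dI ω)
      = ∑ p ∈ ({0} : Finset ℕ) ×ˢ (Finset.range (ω.length + 1) ×ˢ Finset.range ω.length),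
          Fmi ω p := by
    rw [Finset.sum_product, Finset.sum_singleton, Finset.sum_product]
    rw [dI, map_sum]
    apply Finset.sum_congr rfl
    intro k hk
    simp only [Finset.mem_range] at hk
    rw [map_smul, boundaryM_single, one_smul, dM_eq, insertAt2_length ω k (by omega),
      Nat.add_sub_cancel, Finset.smul_sum]
    apply Finset.sum_congr rfl
    intro j _
    rw [Fmi_zero, smul_smul, pow_add]
  have hI : boundaryI (dM ω)
      = ∑ p ∈ ({1} : Finset ℕ) ×ˢ (Finset.range (ω.length - 1) ×ˢ Finset.range ω.length),
          Fmi ω p := by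
    rw [Finset.sum_product, Finset.sum_singleton, Finset.sum_product]
    rw [dM_eq, map_sum]
    apply Finset.sum_congr rfl
    intro i hi
    simp only [Finset.mem_range] at hi
    rw [map_smul, boundaryI_single, one_smul, dI, mergeAt_length ω i (by omega)]
    have h1 : ω.length - 1 + 1 = ω.length := by omega
    rw [h1, Finset.smul_sum]
    apply Finset.sum_congr rfl
    intro j _
    rw [Fmi_one, smul_smul, pow_add]
  have hd : Disjoint
      (({0} : Finset ℕ) ×ˢ (Finset.range (ω.length + 1) ×ˢ Finset.range ω.length))
      (({1} : Finset ℕ) ×ˢ (Finset.range (ω.length - 1) ×ˢ Finset.range ω.length)) := by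
    rw [Finset.disjoint_left]
    rintro ⟨t, a, b⟩ h1 h2
    simp only [Finset.mem_product, Finset.mem_singleton] at h1 h2
    omega
  rw [hM, hI, ← Finset.sum_union hd]
  refine Finset.sum_involution (fun p _ => gmi p) ?_ ?_ ?_ ?_
  · rintro ⟨t, a, b⟩ hp
    simp only [Finset.mem_union, Finset.mem_product, Finset.mem_singleton,
      Finset.mem_range] at hp
    rcases hp with ⟨rfl, ha, hb⟩ | ⟨rfl, ha, hb⟩
    · -- t = 0 : term is M_b (I_a ω)
      rw [gmi_zero]
      split_ifs with h1 h2 h3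
      · -- b + 2 ≤ a
        rw [Fmi_zero, Fmi_one, L1 ω a b h1 (by omega)]
        exact sign_cancel _ _ (by omega) _
      · -- a + 1 ≤ b
        rw [Fmi_zero, Fmi_one, L2 ω a b (by omega) (by omega)]
        exact sign_cancel _ _ (by omega) _
      · -- b = a
        subst h3
        rw [Fmi_zero, Fmi_zero, L3 ω b (by omega)]
        exact sign_cancel _ _ (by omega) _
      · -- b = a - 1
        rw [Fmi_zero, Fmi_zero, L3 ω (a-1) (by omega)]
        have e1 : a - 1 + 1 = a := by omega
        rw [e1]
        have e2 : a - 1 = b := by omega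
        rw [e2]
        exact sign_cancel _ _ (by omega) _
    · -- t = 1 : term is I_b (M_a ω)
      rw [gmi_one]
      split_ifs with h1
      · rw [Fmi_one, Fmi_zero, L1 ω (b+1) a (by omega) (by omega)]
        have e1 : b + 1 - 1 = b := by omega
        rw [e1]
        exact sign_cancel _ _ (by omega) _
      · rw [Fmi_one, Fmi_zero, L2 ω b (a+1) (by omega) (by omega)]
        have e1 : a + 1 - 1 = a := by omega
        rw [e1]
        exact sign_cancel _ _ (by omega) _
  · rintro ⟨t, a, b⟩ hp -
    simp only [Finset.mem_union, Finset.mem_product, Finset.mem_singleton,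
      Finset.mem_range] at hp
    rcases hp with ⟨rfl, ha, hb⟩ | ⟨rfl, ha, hb⟩
    · rw [gmi_zero]
      split_ifs with h1 h2 h3 <;> simp only [ne_eq, Prod.mk.injEq] <;> omega
    · rw [gmi_one]
      split_ifs with h1 <;> simp only [ne_eq, Prod.mk.injEq] <;> omega
  · rintro ⟨t, a, b⟩ hp
    simp only [Finset.mem_union, Finset.mem_product, Finset.mem_singleton,
      Finset.mem_range] at hp
    rcases hp with ⟨rfl, ha, hb⟩ | ⟨rfl, ha, hb⟩
    · rw [gmi_zero]
      split_ifs with h1 h2 h3 <;> simp [Finset.mem_product] <;> omega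
    · rw [gmi_one]
      split_ifs with h1 <;> simp [Finset.mem_product] <;> omega
  · rintro ⟨t, a, b⟩ hp
    simp only [Finset.mem_union, Finset.mem_product, Finset.mem_singleton,
      Finset.mem_range] at hp
    rcases hp with ⟨rfl, ha, hb⟩ | ⟨rfl, ha, hb⟩
    · rw [gmi_zero]
      split_ifs with h1 h2 h3
      · rw [gmi_one, if_pos (by omega : b < a - 1)]
        have e1 : a - 1 + 1 = a := by omega
        rw [e1]
      · rw [gmi_one, if_neg (by omega : ¬ (b - 1 < a))]
        have e1 : b - 1 + 1 = b := by omega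
        rw [e1]
      · subst h3
        rw [gmi_zero, if_neg (by omega : ¬ (b + 2 ≤ b + 1)),
          if_neg (by omega : ¬ (b + 1 + 1 ≤ b)), if_neg (by omega : ¬ (b = b + 1))]
        have e1 : b + 1 - 1 = b := by omega
        rw [e1]
      · rw [gmi_zero, if_neg (by omega : ¬ (a - 1 + 2 ≤ a - 1)),
          if_neg (by omega : ¬ (a - 1 + 1 ≤ a - 1)), if_pos (rfl : a - 1 = a - 1)]
        have e1 : a - 1 + 1 = a := by omega
        have e2 : a - 1 = b := by omega
        rw [e1, e2]
    · rw [gmi_one]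
      split_ifs with h1
      · rw [gmi_zero, if_pos (by omega : a + 2 ≤ b + 1)]
        have e1 : b + 1 - 1 = b := by omega
        rw [e1]
      · rw [gmi_zero, if_neg (by omega : ¬ (a + 1 + 2 ≤ b)),
          if_pos (by omega : b + 1 ≤ a + 1)]
        have e1 : a + 1 - 1 = a := by omega
        rw [e1]

/-! ### Assembly -/

lemma bMM : boundaryM.comp boundaryM = 0 := by
  apply Finsupp.lhom_ext
  intro ω c
  rw [LinearMap.comp_apply, boundaryM_single, map_smul, keyMM, smul_zero,
    LinearMap.zero_apply]

lemma bII : boundaryI.comp boundaryI = 0 := by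
  apply Finsupp.lhom_ext
  intro ω c
  rw [LinearMap.comp_apply, boundaryI_single, map_smul, keyII, smul_zero,
    LinearMap.zero_apply]

lemma part1 : boundaryM.comp boundaryI + boundaryI.comp boundaryM = 0 := by
  apply Finsupp.lhom_ext
  intro ω c
  rw [LinearMap.add_apply, LinearMap.comp_apply, LinearMap.comp_apply,
    boundaryI_single, boundaryM_single, map_smul, map_smul, ← smul_add, keyMI, smul_zero,
    LinearMap.zero_apply]

/-- The two differentials anticommute: `∂_M ∘ ∂_I + ∂_I ∘ ∂_M = 0`; consequently
`∂ = ∂_M + ∂_I` satisfies `∂ ∘ ∂ = 0`. -/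
theorem boundaryM_boundaryI_anticommute :
    boundaryM.comp boundaryI + boundaryI.comp boundaryM = 0 ∧
    (boundaryM + boundaryI).comp (boundaryM + boundaryI) = 0 := by
  refine ⟨part1, ?_⟩
  rw [LinearMap.add_comp, LinearMap.comp_add, LinearMap.comp_add, bMM, bII, zero_add, add_zero]
  exact part1
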